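/- Let c, d be increasing positive integer sequences of lengths m, n, with l = max(m,n), h = max(c_m, d_n). Let A ⊆ L_c^{(≤m)} and B ⊆ L_d^{(≤n)} be cross-intersecting families of labeled sets. If A* and B* are obtained from A and B by applying all operations Γ_{x,y} for x ∈ [l], y ∈ [2,h] (in the order Γ_{1,2},…,Γ_{1,h}, Γ_{2,2},…, Γ_{l,h}, simultaneously to both families), then A ∩ B ∩ ([l] × {1}) ≠ ∅ for every A ∈ A*, B ∈ B*. -/

import Mathlib

def gamma (x y : ℕ) (S : Finset (ℕ × ℕ)) : Finset (ℕ × ℕ) :=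
  if (x, y) ∈ S then insert (x, 1) (S.erase (x, y)) else S

def Gamma (x y : ℕ) (F : Finset (Finset (ℕ × ℕ))) : Finset (Finset (ℕ × ℕ)) :=
  (F.filter fun A => gamma x y A ∈ F) ∪
    ((F.filter fun A => gamma x y A ∉ F).image (gamma x y))

def IsLabeled (m : ℕ) (c : ℕ → ℕ) (S : Finset (ℕ × ℕ)) : Prop :=
  S.Nonempty ∧ (∀ p ∈ S, 1 ≤ p.1 ∧ p.1 ≤ m ∧ 1 ≤ p.2 ∧ p.2 ≤ c p.1) ∧
    ∀ p ∈ S, ∀ q ∈ S, p.1 = q.1 → p = q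

/-- The list of pairs `(x, y)` for `x ∈ [l]`, `y ∈ [2, h]`, in the order
`(1,2), …, (1,h), (2,2), …, (l,h)`. -/
def allPairs (l h : ℕ) : List (ℕ × ℕ) :=
  (List.range' 1 l).flatMap fun x => (List.range' 2 (h - 1)).map fun y => (x, y)

/-- Apply `Γ_{x,y}` for all pairs in `allPairs l h`, in order. -/
def compressAll (l h : ℕ) (F : Finset (Finset (ℕ × ℕ))) : Finset (Finset (ℕ × ℕ)) :=
  (allPairs l h).foldl (fun F p => Gamma p.1 p.2 F) F

lemma gamma_mem_of {p : ℕ × ℕ} {x y : ℕ} {S : Finset (ℕ × ℕ)}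
    (hp : p ∈ gamma x y S) : p = (x, 1) ∨ (p ∈ S ∧ p ≠ (x, y)) := by
  unfold gamma at hp
  split_ifs at hp with h
  · rcases Finset.mem_insert.1 hp with h1 | h1
    · exact Or.inl h1
    · exact Or.inr ⟨Finset.mem_of_mem_erase h1, Finset.ne_of_mem_erase h1⟩
  · exact Or.inr ⟨hp, fun he => h (he ▸ hp)⟩

lemma mem_gamma_of {p : ℕ × ℕ} {x y : ℕ} {S : Finset (ℕ × ℕ)}
    (hp : p ∈ S) (hne : p ≠ (x, y)) : p ∈ gamma x y S := by
  unfold gamma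
  split_ifs with h
  · exact Finset.mem_insert_of_mem (Finset.mem_erase.2 ⟨hne, hp⟩)
  · exact hp

lemma one_mem_gamma {x y : ℕ} {S : Finset (ℕ × ℕ)} (h : (x, y) ∈ S) :
    (x, 1) ∈ gamma x y S := by
  unfold gamma; simp [h]

lemma gamma_eq_of_mem {x y : ℕ} {S : Finset (ℕ × ℕ)} (h : (x, y) ∈ S) :
    gamma x y S = insert (x, 1) (S.erase (x, y)) := if_pos h

lemma gamma_eq_of_not_mem {x y : ℕ} {S : Finset (ℕ × ℕ)} (h : (x, y) ∉ S) :
    gamma x y S = S := if_neg h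

lemma xy_not_mem_gamma {x y : ℕ} {S : Finset (ℕ × ℕ)} (hy : 2 ≤ y) :
    (x, y) ∉ gamma x y S := by
  intro h
  rcases gamma_mem_of h with h1 | h1
  · have : y = 1 := congrArg Prod.snd h1
    omega
  · exact h1.2 rfl

lemma gamma_gamma {x y : ℕ} {S : Finset (ℕ × ℕ)} (hy : 2 ≤ y) :
    gamma x y (gamma x y S) = gamma x y S :=
  gamma_eq_of_not_mem (xy_not_mem_gamma hy)

lemma gamma_labeled {m x y : ℕ} {c : ℕ → ℕ} {S : Finset (ℕ × ℕ)}
    (hS : IsLabeled m c S) : IsLabeled m c (gamma x y S) := by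
  obtain ⟨hne, hbd, huniq⟩ := hS
  unfold gamma
  split_ifs with h
  · refine ⟨⟨(x, 1), Finset.mem_insert_self _ _⟩, ?_, ?_⟩
    · intro p hp
      rcases Finset.mem_insert.1 hp with rfl | hp'
      · have hb := hbd _ h
        exact ⟨hb.1, hb.2.1, le_refl 1, le_trans hb.2.2.1 hb.2.2.2⟩
      · exact hbd _ (Finset.mem_of_mem_erase hp')
    · intro p hp q hq hpq
      rcases Finset.mem_insert.1 hp with rfl | hp' <;>
        rcases Finset.mem_insert.1 hq with h2 | hq'
      · exact h2.symm
      · exfalso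
        have : (x, y) = q := huniq _ h _ (Finset.mem_of_mem_erase hq') hpq
        exact Finset.ne_of_mem_erase hq' this.symm
      · subst h2
        exfalso
        have : (x, y) = p := huniq _ h _ (Finset.mem_of_mem_erase hp') hpq.symm
        exact Finset.ne_of_mem_erase hp' this.symm
      · exact huniq _ (Finset.mem_of_mem_erase hp') _ (Finset.mem_of_mem_erase hq') hpq
  · exact ⟨hne, hbd, huniq⟩

lemma gamma_comm {m x y x' y' : ℕ} {c : ℕ → ℕ} {S : Finset (ℕ × ℕ)}
    (hS : IsLabeled m c S) (hy : 2 ≤ y) (hy' : 2 ≤ y') (hne : (x, y) ≠ (x', y')) :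
    gamma x y (gamma x' y' S) = gamma x' y' (gamma x y S) := by
  by_cases hb : (x', y') ∈ S <;> by_cases ha : (x, y) ∈ S
  · -- both in S
    by_cases hxx : x = x'
    · subst hxx
      exact absurd (hS.2.2 _ ha _ hb rfl) hne
    · rw [gamma_eq_of_mem hb, gamma_eq_of_mem ha]
      have ha' : (x, y) ∈ insert (x', 1) (S.erase (x', y')) :=
        Finset.mem_insert_of_mem (Finset.mem_erase.2 ⟨hne, ha⟩)
      have hb' : (x', y') ∈ insert (x, 1) (S.erase (x, y)) :=
        Finset.mem_insert_of_mem (Finset.mem_erase.2 ⟨fun h => hne h.symm, hb⟩)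
      rw [gamma_eq_of_mem ha', gamma_eq_of_mem hb']
      have h1 : ((x', 1) : ℕ × ℕ) ≠ (x, y) := fun h => hxx (congrArg Prod.fst h).symm
      have h2 : ((x, 1) : ℕ × ℕ) ≠ (x', y') := fun h => hxx (congrArg Prod.fst h)
      rw [Finset.erase_insert_of_ne h1, Finset.erase_insert_of_ne h2,
        Finset.insert_comm, Finset.erase_right_comm]
  · -- (x',y') ∈ S, (x,y) ∉ S
    rw [gamma_eq_of_not_mem ha]
    have : (x, y) ∉ gamma x' y' S := by
      intro hc
      rcases gamma_mem_of hc with h1 | h1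
      · have : y = 1 := congrArg Prod.snd h1
        omega
      · exact ha h1.1
    rw [gamma_eq_of_not_mem this]
  · -- (x,y) ∈ S, (x',y') ∉ S
    rw [gamma_eq_of_not_mem hb]
    have : (x', y') ∉ gamma x y S := by
      intro hc
      rcases gamma_mem_of hc with h1 | h1
      · have : y' = 1 := congrArg Prod.snd h1
        omega
      · exact hb h1.1
    rw [gamma_eq_of_not_mem this]
  · rw [gamma_eq_of_not_mem ha, gamma_eq_of_not_mem hb]
    have h1 : (x, y) ∉ gamma x' y' S := by
      rw [gamma_eq_of_not_mem hb]; exact ha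
    have h2 : (x', y') ∉ gamma x y S := by
      rw [gamma_eq_of_not_mem ha]; exact hb
    exact gamma_eq_of_not_mem ha

def Lab (m : ℕ) (c : ℕ → ℕ) (F : Finset (Finset (ℕ × ℕ))) : Prop :=
  ∀ S ∈ F, IsLabeled m c S

def Comp (x y : ℕ) (F : Finset (Finset (ℕ × ℕ))) : Prop :=
  ∀ S ∈ F, gamma x y S ∈ F

def Cross (A B : Finset (Finset (ℕ × ℕ))) : Prop :=
  ∀ S ∈ A, ∀ T ∈ B, (S ∩ T).Nonempty

lemma mem_Gamma_iff {x y : ℕ} {S' : Finset (ℕ × ℕ)} {F : Finset (Finset (ℕ × ℕ))} :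
    S' ∈ Gamma x y F ↔ (S' ∈ F ∧ gamma x y S' ∈ F) ∨
      ∃ S ∈ F, gamma x y S ∉ F ∧ gamma x y S = S' := by
  simp only [Gamma, Finset.mem_union, Finset.mem_filter, Finset.mem_image]
  tauto

lemma Lab_Gamma {m x y : ℕ} {c : ℕ → ℕ} {F : Finset (Finset (ℕ × ℕ))}
    (h : Lab m c F) : Lab m c (Gamma x y F) := by
  intro S' hS'
  rcases mem_Gamma_iff.1 hS' with ⟨h1, _⟩ | ⟨S, hS, _, rfl⟩
  · exact h _ h1
  · exact gamma_labeled (h _ hS)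

lemma Comp_Gamma_self {x y : ℕ} {F : Finset (Finset (ℕ × ℕ))} (hy : 2 ≤ y) :
    Comp x y (Gamma x y F) := by
  intro S' hS'
  rcases mem_Gamma_iff.1 hS' with ⟨h1, h2⟩ | ⟨S, hS, hgS, rfl⟩
  · exact mem_Gamma_iff.2 (Or.inl ⟨h2, by rw [gamma_gamma hy]; exact h2⟩)
  · rw [gamma_gamma hy]
    exact hS'

lemma Comp_Gamma {m x y x' y' : ℕ} {c : ℕ → ℕ} {F : Finset (Finset (ℕ × ℕ))}
    (hlab : Lab m c F) (hy : 2 ≤ y) (hy' : 2 ≤ y') (hne : (x, y) ≠ (x', y'))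
    (hF : Comp x y F) : Comp x y (Gamma x' y' F) := by
  intro S' hS'
  rcases mem_Gamma_iff.1 hS' with ⟨h1, h2⟩ | ⟨S, hS, hgS, rfl⟩
  · refine mem_Gamma_iff.2 (Or.inl ⟨hF _ h1, ?_⟩)
    rw [← gamma_comm (hlab _ h1) hy hy' hne]
    exact hF _ h2
  · rw [gamma_comm (hlab _ hS) hy hy' hne]
    by_cases hc : gamma x' y' (gamma x y S) ∈ F
    · exact mem_Gamma_iff.2 (Or.inl ⟨hc, by rw [gamma_gamma hy']; exact hc⟩)
    · exact mem_Gamma_iff.2 (Or.inr ⟨gamma x y S, hF _ hS, hc, rfl⟩)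

lemma cross_helper {m' x y : ℕ} {c' : ℕ → ℕ} {S T' : Finset (ℕ × ℕ)}
    (hS : IsLabeled m' c' S) (hy : 2 ≤ y)
    (h1 : (S ∩ T').Nonempty) (h2 : (S ∩ gamma x y T').Nonempty) :
    (gamma x y S ∩ T').Nonempty := by
  by_cases hex : ∃ p ∈ S ∩ T', p ≠ (x, y)
  · obtain ⟨p, hp, hpne⟩ := hex
    exact ⟨p, Finset.mem_inter.2 ⟨mem_gamma_of (Finset.mem_inter.1 hp).1 hpne,
      (Finset.mem_inter.1 hp).2⟩⟩
  · push_neg at hex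
    obtain ⟨e, he⟩ := h1
    have hexy : e = (x, y) := hex e he
    subst hexy
    obtain ⟨f, hf⟩ := h2
    have hfS := (Finset.mem_inter.1 hf).1
    rcases gamma_mem_of (Finset.mem_inter.1 hf).2 with rfl | ⟨hfT, hfne⟩
    · exfalso
      have hxyS := (Finset.mem_inter.1 he).1
      have := hS.2.2 _ hfS _ hxyS rfl
      have : (1 : ℕ) = y := congrArg Prod.snd this
      omega
    · exact absurd (hex f (Finset.mem_inter.2 ⟨hfS, hfT⟩)) (by exact fun h => hfne h)

lemma Cross_Gamma {m n x y : ℕ} {c d : ℕ → ℕ} {A B : Finset (Finset (ℕ × ℕ))}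
    (hlabA : Lab m c A) (hlabB : Lab n d B) (hy : 2 ≤ y) (h : Cross A B) :
    Cross (Gamma x y A) (Gamma x y B) := by
  intro S' hS' T' hT'
  rcases mem_Gamma_iff.1 hS' with ⟨hS1, hS2⟩ | ⟨S, hS, hgS, rfl⟩ <;>
    rcases mem_Gamma_iff.1 hT' with ⟨hT1, hT2⟩ | ⟨T, hT, hgT, rfl⟩
  · exact h _ hS1 _ hT1
  · -- S' ∈ A, T' = gamma T
    have := cross_helper (hlabB _ hT) hy
      (by rw [Finset.inter_comm]; exact h _ hS1 _ hT)
      (by rw [Finset.inter_comm]; exact h _ hS2 _ hT)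
    rwa [Finset.inter_comm] at this
  · exact cross_helper (hlabA _ hS) hy (h _ hS _ hT1) (h _ hS _ hT2)
  · obtain ⟨e, he⟩ := h _ hS _ hT
    obtain ⟨heS, heT⟩ := Finset.mem_inter.1 he
    by_cases hexy : e = (x, y)
    · subst hexy
      exact ⟨(x, 1), Finset.mem_inter.2 ⟨one_mem_gamma heS, one_mem_gamma heT⟩⟩
    · exact ⟨e, Finset.mem_inter.2 ⟨mem_gamma_of heS hexy, mem_gamma_of heT hexy⟩⟩

def foldG (L : List (ℕ × ℕ)) (F : Finset (Finset (ℕ × ℕ))) : Finset (Finset (ℕ × ℕ)) :=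
  L.foldl (fun F p => Gamma p.1 p.2 F) F

lemma foldG_nil {F} : foldG [] F = F := rfl

lemma foldG_cons {p L F} : foldG (p :: L) F = foldG L (Gamma p.1 p.2 F) := rfl

lemma Lab_foldG {m : ℕ} {c : ℕ → ℕ} (L : List (ℕ × ℕ)) :
    ∀ {F}, Lab m c F → Lab m c (foldG L F) := by
  induction L with
  | nil => intro F h; exact h
  | cons p L ih => intro F h; exact ih (Lab_Gamma h)

lemma Comp_foldG {m x y : ℕ} {c : ℕ → ℕ} (L : List (ℕ × ℕ))
    (hL : ∀ p ∈ L, 2 ≤ p.2) (hy : 2 ≤ y) :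
    ∀ {F}, Lab m c F → Comp x y F → Comp x y (foldG L F) := by
  induction L with
  | nil => intro F _ h; exact h
  | cons p L ih =>
    intro F hlab hc
    rw [foldG_cons]
    have hp2 : 2 ≤ p.2 := hL p List.mem_cons_self
    have hL' : ∀ q ∈ L, 2 ≤ q.2 := fun q hq => hL q (List.mem_cons_of_mem _ hq)
    by_cases hpe : (x, y) = (p.1, p.2)
    · have : Comp x y (Gamma p.1 p.2 F) := by
        rw [show x = p.1 from congrArg Prod.fst hpe, show y = p.2 from congrArg Prod.snd hpe]
        exact Comp_Gamma_self hp2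
      exact ih hL' (Lab_Gamma hlab) this
    · exact ih hL' (Lab_Gamma hlab) (Comp_Gamma hlab hy hp2 hpe hc)

lemma Cross_foldG {m n : ℕ} {c d : ℕ → ℕ} (L : List (ℕ × ℕ))
    (hL : ∀ p ∈ L, 2 ≤ p.2) :
    ∀ {A B}, Lab m c A → Lab n d B → Cross A B → Cross (foldG L A) (foldG L B) := by
  induction L with
  | nil => intro A B _ _ h; exact h
  | cons p L ih =>
    intro A B hlabA hlabB h
    have hp2 : 2 ≤ p.2 := hL p List.mem_cons_self
    have hL' : ∀ q ∈ L, 2 ≤ q.2 := fun q hq => hL q (List.mem_cons_of_mem _ hq)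
    exact ih hL' (Lab_Gamma hlabA) (Lab_Gamma hlabB)
      (Cross_Gamma hlabA hlabB hp2 h)

lemma Comp_foldG_all {m : ℕ} {c : ℕ → ℕ} (L : List (ℕ × ℕ))
    (hL : ∀ p ∈ L, 2 ≤ p.2) :
    ∀ {F}, Lab m c F → ∀ p ∈ L, Comp p.1 p.2 (foldG L F) := by
  induction L with
  | nil => intro F _ p hp; exact absurd hp List.not_mem_nil
  | cons q L ih =>
    intro F hlab p hp
    have hq2 : 2 ≤ q.2 := hL q List.mem_cons_self
    have hL' : ∀ r ∈ L, 2 ≤ r.2 := fun r hr => hL r (List.mem_cons_of_mem _ hr)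
    rcases List.mem_cons.1 hp with rfl | hp'
    · rw [foldG_cons]
      exact Comp_foldG L hL' hq2 (Lab_Gamma hlab) (Comp_Gamma_self hq2)
    · exact ih hL' (Lab_Gamma hlab) p hp'
lemma allPairs_snd {l h : ℕ} : ∀ p ∈ allPairs l h, 2 ≤ p.2 := by
  intro p hp
  simp only [allPairs, List.mem_flatMap, List.mem_map, List.mem_range'_1] at hp
  obtain ⟨x, _, y, hy, rfl⟩ := hp
  exact hy.1

lemma mem_allPairs {l h x y : ℕ} (hx1 : 1 ≤ x) (hxl : x ≤ l) (hy2 : 2 ≤ y)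
    (hyh : y ≤ h) : (x, y) ∈ allPairs l h := by
  simp only [allPairs, List.mem_flatMap, List.mem_map, List.mem_range'_1]
  exact ⟨x, ⟨hx1, by omega⟩, y, ⟨hy2, by omega⟩, rfl⟩

lemma extract {m n l h : ℕ} {c d : ℕ → ℕ} {A B : Finset (Finset (ℕ × ℕ))}
    (hml : m ≤ l) (hch : ∀ x, 1 ≤ x → x ≤ m → c x ≤ h)
    (hlabA : Lab m c A) (hlabB : Lab n d B) (hcross : Cross A B)
    (hcomp : ∀ x y, 1 ≤ x → x ≤ l → 2 ≤ y → y ≤ h → Comp x y A) :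
    ∀ k S T, S ∈ A → T ∈ B → (S ∩ T).card ≤ k →
      (S ∩ T ∩ (Finset.Icc 1 l ×ˢ ({1} : Finset ℕ))).Nonempty := by
  intro k
  induction k with
  | zero =>
    intro S T hS hT hcard
    obtain ⟨e, he⟩ := hcross _ hS _ hT
    exact absurd (Finset.card_pos.2 ⟨e, he⟩) (by omega)
  | succ k ih =>
    intro S T hS hT hcard
    obtain ⟨e, he⟩ := hcross _ hS _ hT
    obtain ⟨heS, heT⟩ := Finset.mem_inter.1 he
    obtain ⟨x, y⟩ := e
    have hbS := (hlabA _ hS).2.1 _ heS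
    by_cases hy1 : y = 1
    · subst hy1
      refine ⟨(x, 1), ?_⟩
      simp only [Finset.mem_inter, Finset.mem_product, Finset.mem_Icc,
        Finset.mem_singleton]
      exact ⟨⟨heS, heT⟩, ⟨hbS.1, le_trans hbS.2.1 hml⟩, trivial⟩
    · have hy2 : 2 ≤ y := by have := hbS.2.2.1; omega
      have hyh : y ≤ h := le_trans hbS.2.2.2 (hch x hbS.1 hbS.2.1)
      have hgS : gamma x y S ∈ A :=
        hcomp x y hbS.1 (le_trans hbS.2.1 hml) hy2 hyh _ hS
      have hx1T : (x, 1) ∉ T := by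
        intro hc
        have := (hlabB _ hT).2.2 _ hc _ heT rfl
        have : (1 : ℕ) = y := congrArg Prod.snd this
        omega
      have hsub : gamma x y S ∩ T ⊆ (S ∩ T).erase (x, y) := by
        intro p hp
        obtain ⟨hp1, hp2⟩ := Finset.mem_inter.1 hp
        rcases gamma_mem_of hp1 with rfl | ⟨hpS, hpne⟩
        · exact absurd hp2 hx1T
        · exact Finset.mem_erase.2 ⟨hpne, Finset.mem_inter.2 ⟨hpS, hp2⟩⟩
      have hcard' : (gamma x y S ∩ T).card ≤ k := by
        have h1 := Finset.card_le_card hsub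
        have h2 : ((S ∩ T).erase (x, y)).card = (S ∩ T).card - 1 :=
          Finset.card_erase_of_mem he
        have h3 : 1 ≤ (S ∩ T).card := Finset.card_pos.2 ⟨_, he⟩
        omega
      obtain ⟨p, hp⟩ := ih (gamma x y S) T hgS hT hcard'
      simp only [Finset.mem_inter] at hp
      obtain ⟨⟨hp1, hp2⟩, hp3⟩ := hp
      rcases gamma_mem_of hp1 with rfl | ⟨hpS, _⟩
      · exact absurd hp2 hx1T
      · exact ⟨p, Finset.mem_inter.2 ⟨Finset.mem_inter.2 ⟨hpS, hp2⟩, hp3⟩⟩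

theorem stmt12' (m n : ℕ) (hm : 1 ≤ m) (hn : 1 ≤ n) (c d : ℕ → ℕ)
    (hcmono : ∀ i j, 1 ≤ i → i ≤ j → j ≤ m → c i ≤ c j)
    (hcpos : ∀ i, 1 ≤ i → i ≤ m → 1 ≤ c i)
    (hdmono : ∀ i j, 1 ≤ i → i ≤ j → j ≤ n → d i ≤ d j)
    (hdpos : ∀ i, 1 ≤ i → i ≤ n → 1 ≤ d i)
    (A B : Finset (Finset (ℕ × ℕ)))
    (hA : ∀ S ∈ A, IsLabeled m c S) (hB : ∀ S ∈ B, IsLabeled n d S)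
    (hcross : ∀ S ∈ A, ∀ T ∈ B, (S ∩ T).Nonempty) :
    ∀ S ∈ (allPairs (max m n) (max (c m) (d n))).foldl (fun F p => Gamma p.1 p.2 F) A,
      ∀ T ∈ (allPairs (max m n) (max (c m) (d n))).foldl (fun F p => Gamma p.1 p.2 F) B,
        (S ∩ T ∩ (Finset.Icc 1 (max m n) ×ˢ ({1} : Finset ℕ))).Nonempty := by
  set l := max m n
  set h := max (c m) (d n)
  set L := allPairs l h
  intro S hS T hT
  have hL : ∀ p ∈ L, 2 ≤ p.2 := allPairs_snd
  have hlabA : Lab m c (foldG L A) := Lab_foldG L hA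
  have hlabB : Lab n d (foldG L B) := Lab_foldG L hB
  have hcross' : Cross (foldG L A) (foldG L B) := Cross_foldG L hL hA hB hcross
  have hcomp : ∀ x y, 1 ≤ x → x ≤ l → 2 ≤ y → y ≤ h → Comp x y (foldG L A) := by
    intro x y hx1 hxl hy2 hyh
    exact Comp_foldG_all L hL hA (x, y) (mem_allPairs hx1 hxl hy2 hyh)
  exact extract (le_max_left m n)
    (fun x hx1 hxm => le_trans (hcmono x m hx1 hxm le_rfl) (le_max_left _ _))
    hlabA hlabB hcross' hcomp (S ∩ T).card S T hS hT le_rfl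

theorem stmt12 (m n : ℕ) (hm : 1 ≤ m) (hn : 1 ≤ n) (c d : ℕ → ℕ)
    (hcmono : ∀ i j, 1 ≤ i → i ≤ j → j ≤ m → c i ≤ c j)
    (hcpos : ∀ i, 1 ≤ i → i ≤ m → 1 ≤ c i)
    (hdmono : ∀ i j, 1 ≤ i → i ≤ j → j ≤ n → d i ≤ d j)
    (hdpos : ∀ i, 1 ≤ i → i ≤ n → 1 ≤ d i)
    (A B : Finset (Finset (ℕ × ℕ)))
    (hA : ∀ S ∈ A, IsLabeled m c S) (hB : ∀ S ∈ B, IsLabeled n d S)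
    (hcross : ∀ S ∈ A, ∀ T ∈ B, (S ∩ T).Nonempty) :
    ∀ S ∈ compressAll (max m n) (max (c m) (d n)) A,
      ∀ T ∈ compressAll (max m n) (max (c m) (d n)) B,
        (S ∩ T ∩ (Finset.Icc 1 (max m n) ×ˢ ({1} : Finset ℕ))).Nonempty := by
  exact stmt12' m n hm hn c d hcmono hcpos hdmono hdpos A B hA hB hcross
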